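/- arXiv:math/0405594 — 2 statements merged into one kernel-verified Lean document; each statement's English description precedes it below -/
import Mathlib

section
/- For all n ≥ 1: ∑_{i=1}^{n} i!·Θ(n,i) = 2^{n-1}, where Θ(n,i) are the tanh numbers defined by (1/i!)·tanh(u)^i = ∑_n Θ(n,i) u^n/n!. -/
open PowerSeries Finset

/-- Unsigned Lah numbers: `L(n,m) = (n!/m!) * C(n-1,m-1)` for `n ≥ m ≥ 1`, else `0`. -/
noncomputable def lahN (n m : ℕ) : ℚ :=
  if 1 ≤ m ∧ m ≤ n then (n.factorial : ℚ) / (m.factorial : ℚ) * ((n - 1).choose (m - 1) : ℚ)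
  else 0

/-- Unsigned Stirling numbers of the first kind (permutations of `n` with `m` cycles). -/
def stirling1 : ℕ → ℕ → ℕ
  | 0, 0 => 1
  | 0, _ + 1 => 0
  | _ + 1, 0 => 0
  | n + 1, m + 1 => n * stirling1 n (m + 1) + stirling1 n m

/-- Stirling numbers of the second kind. -/
def stirling2 : ℕ → ℕ → ℕ
  | 0, 0 => 1
  | 0, _ + 1 => 0
  | _ + 1, 0 => 0
  | n + 1, m + 1 => (m + 1) * stirling2 n (m + 1) + stirling2 n m

/-- `tanh` as a formal power series over `ℚ`: `(e^u - e^{-u}) / (e^u + e^{-u})`. -/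
noncomputable def tanhS : PowerSeries ℚ :=
  (PowerSeries.exp ℚ - PowerSeries.rescale (-1) (PowerSeries.exp ℚ)) *
    (PowerSeries.exp ℚ + PowerSeries.rescale (-1) (PowerSeries.exp ℚ))⁻¹

/-- `arctanh u = (1/2) log((1+u)/(1-u)) = ∑_{j≥0} u^{2j+1}/(2j+1)` as a formal power series. -/
noncomputable def arctanhS : PowerSeries ℚ :=
  PowerSeries.mk fun n => if n % 2 = 1 then (1 : ℚ) / n else 0

/-- Tanh numbers `Θ(n,m)`, defined by `(1/m!) tanh(u)^m = ∑_n Θ(n,m) u^n/n!`. -/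
noncomputable def ThetaT (n m : ℕ) : ℚ :=
  (n.factorial : ℚ) / (m.factorial : ℚ) * PowerSeries.coeff n (tanhS ^ m)

/-- Arctanh numbers `θ(n,m)`, defined by `(1/m!) arctanh(u)^m = ∑_n θ(n,m) u^n/n!`. -/
noncomputable def thetaA (n m : ℕ) : ℚ :=
  (n.factorial : ℚ) / (m.factorial : ℚ) * PowerSeries.coeff n (arctanhS ^ m)

section Aux

open PowerSeries Finset

private noncomputable def Ebase : PowerSeries ℚ := PowerSeries.exp ℚ
private noncomputable def Fneg : PowerSeries ℚ := PowerSeries.rescale (-1) (PowerSeries.exp ℚ)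
private noncomputable def Cser : PowerSeries ℚ :=
  (1/2 : ℚ) • (PowerSeries.rescale 2 (PowerSeries.exp ℚ) + 1)

private lemma cc_rescale (a : ℚ) (f : ℚ⟦X⟧) :
    constantCoeff (PowerSeries.rescale a f) = constantCoeff f := by
  rw [← PowerSeries.coeff_zero_eq_constantCoeff_apply, PowerSeries.coeff_rescale]
  simp [PowerSeries.coeff_zero_eq_constantCoeff_apply]

private lemma constantCoeff_B :
    constantCoeff (PowerSeries.exp ℚ + PowerSeries.rescale (-1) (PowerSeries.exp ℚ)) = 2 := by
  rw [map_add, cc_rescale]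
  simp [PowerSeries.constantCoeff_exp]
  norm_num

private lemma constantCoeff_tanhS : constantCoeff tanhS = 0 := by
  unfold tanhS
  rw [map_mul, map_sub, cc_rescale]
  simp [PowerSeries.constantCoeff_exp]

private lemma one_sub_tanh_mul_C : (1 - tanhS) * Cser = 1 := by
  have hB : constantCoeff (PowerSeries.exp ℚ + PowerSeries.rescale (-1) (PowerSeries.exp ℚ)) ≠ 0 := by
    rw [constantCoeff_B]; norm_num
  set B := PowerSeries.exp ℚ + PowerSeries.rescale (-1) (PowerSeries.exp ℚ) with hBdef
  have hinv : B * B⁻¹ = 1 := PowerSeries.mul_inv_cancel _ hB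
  have h1 : (1 - tanhS) = (PowerSeries.rescale (-1) (PowerSeries.exp ℚ) * 2) * B⁻¹ := by
    unfold tanhS
    have : (1 : PowerSeries ℚ) = B * B⁻¹ := hinv.symm
    rw [this, ← sub_mul]
    congr 1
    rw [hBdef]; ring
  rw [h1]
  have h2 : PowerSeries.rescale (-1) (PowerSeries.exp ℚ) * 2 * B⁻¹ * Cser
      = B⁻¹ * (PowerSeries.rescale (-1) (PowerSeries.exp ℚ) * (2 * Cser)) := by ring
  rw [h2]
  have h3 : (2 : PowerSeries ℚ) * Cser = PowerSeries.rescale 2 (PowerSeries.exp ℚ) + 1 := by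
    unfold Cser
    rw [smul_eq_C_mul, ← mul_assoc,
      show (2:ℚ⟦X⟧) = PowerSeries.C 2 from (map_ofNat (PowerSeries.C (R := ℚ)) 2).symm, ← map_mul]
    norm_num
  rw [h3, mul_add, mul_one]
  have h4 : PowerSeries.rescale (-1) (PowerSeries.exp ℚ) * PowerSeries.rescale 2 (PowerSeries.exp ℚ)
      = PowerSeries.exp ℚ := by
    rw [PowerSeries.exp_mul_exp_eq_exp_add]
    norm_num
  rw [h4, ← hBdef, mul_comm, hinv]

private lemma coeff_geom (n : ℕ) (hn : 1 ≤ n) :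
    (PowerSeries.coeff n) (∑ i ∈ Finset.range (n+1), tanhS ^ i)
      = 2 ^ n / (2 * n.factorial) := by
  have hgeom : (∑ i ∈ Finset.range (n+1), tanhS ^ i) * (1 - tanhS) = -(tanhS ^ (n+1) - 1) := by
    have := geom_sum_mul tanhS (n+1)
    linear_combination -this
  have hS : (∑ i ∈ Finset.range (n+1), tanhS ^ i)
      = (1 - tanhS ^ (n+1)) * Cser := by
    have := congrArg (· * Cser) hgeom
    simpa [mul_assoc, one_sub_tanh_mul_C, neg_sub] using this
  rw [hS, sub_mul, one_mul, map_sub]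
  have hX : (PowerSeries.X : ℚ⟦X⟧) ∣ tanhS := PowerSeries.X_dvd_iff.2 constantCoeff_tanhS
  have hdvd : (PowerSeries.X : ℚ⟦X⟧) ^ (n+1) ∣ tanhS ^ (n+1) * Cser :=
    Dvd.dvd.mul_right (pow_dvd_pow_of_dvd hX (n+1)) Cser
  have hz : (PowerSeries.coeff n) (tanhS ^ (n+1) * Cser) = 0 :=
    PowerSeries.X_pow_dvd_iff.1 hdvd n (Nat.lt_succ_self n)
  rw [hz, sub_zero]
  unfold Cser
  rw [map_smul, map_add, PowerSeries.coeff_rescale, PowerSeries.coeff_exp]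
  have h1 : (PowerSeries.coeff n) (1 : ℚ⟦X⟧) = 0 := by
    rw [PowerSeries.coeff_one, if_neg (by omega)]
  rw [h1, add_zero]
  simp [smul_eq_mul, algebraMap]
  field_simp

end Aux

/-- ∑_{i=1}^{n} i! Θ(n,i) = 2^{n-1} for all n ≥ 1. -/
theorem sum_factorial_tanh_numbers (n : ℕ) (hn : 1 ≤ n) :
    ∑ i ∈ Finset.Icc 1 n, (i.factorial : ℚ) * ThetaT n i = (2 : ℚ) ^ (n - 1) := by
  have hterm : ∀ i ∈ Finset.Icc 1 n, (i.factorial : ℚ) * ThetaT n i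
      = (n.factorial : ℚ) * PowerSeries.coeff n (tanhS ^ i) := by
    intro i _
    unfold ThetaT
    have hi : (i.factorial : ℚ) ≠ 0 := Nat.cast_ne_zero.2 i.factorial_ne_zero
    field_simp
  rw [Finset.sum_congr rfl hterm, ← Finset.mul_sum, ← map_sum]
  have hone : (PowerSeries.coeff n) (1 : ℚ⟦X⟧) = 0 := by
    rw [PowerSeries.coeff_one, if_neg (by omega)]
  have hrange : ∑ i ∈ Finset.range (n+1), tanhS ^ i
      = 1 + ∑ i ∈ Finset.Icc 1 n, tanhS ^ i := by
    rw [show Finset.range (n+1) = insert 0 (Finset.Icc 1 n) by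
        ext x; simp [Nat.lt_succ_iff]; omega,
      Finset.sum_insert (by simp)]
    simp
  have hco : (PowerSeries.coeff n) (∑ i ∈ Finset.Icc 1 n, tanhS ^ i)
      = 2 ^ n / (2 * n.factorial) := by
    have := coeff_geom n hn
    rw [hrange, map_add, hone, zero_add] at this
    exact this
  rw [hco]
  have hnf : (n.factorial : ℚ) ≠ 0 := Nat.cast_ne_zero.2 n.factorial_ne_zero
  have h2 : (2:ℚ) ^ n = 2 * 2 ^ (n-1) := by
    rw [← pow_succ']
    congr 1
    omega
  field_simp
  rw [h2]
end

section
/- For all n ≥ 1: ∑_{i=1}^{n} θ(n,i)·2^{i-1} = n!, where θ(n,i) are the arctanh numbers defined by (1/i!)·arctanh(u)^i = ∑_n θ(n,i) u^n/n!. -/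
open PowerSeries Finset

lemma coeff_arctanhS (n : ℕ) :
    PowerSeries.coeff n arctanhS = if n % 2 = 1 then (1 : ℚ) / n else 0 := by
  simp [arctanhS]

lemma coeff_deriv_arctanhS (n : ℕ) :
    PowerSeries.coeff n (PowerSeries.derivative ℚ arctanhS)
      = if n % 2 = 0 then 1 else 0 := by
  rw [PowerSeries.coeff_derivative, coeff_arctanhS]
  rcases (by omega : n % 2 = 0 ∨ n % 2 = 1) with h | h
  · rw [if_pos (by omega : (n+1) % 2 = 1), if_pos h]
    field_simp
    push_cast; ring
  · rw [if_neg (by omega : ¬ (n+1) % 2 = 1), if_neg (by omega : ¬ n % 2 = 0), zero_mul]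

lemma key : ((1 : ℚ⟦X⟧) - X ^ 2) * (PowerSeries.derivative ℚ arctanhS) = 1 := by
  ext n
  rw [sub_mul, one_mul, map_sub,
    show (X:ℚ⟦X⟧)^2 * (PowerSeries.derivative ℚ arctanhS)
      = (PowerSeries.derivative ℚ arctanhS) * X^2 by ring,
    PowerSeries.coeff_mul_X_pow']
  rcases Nat.lt_or_ge n 2 with h | h
  · interval_cases n <;>
      simp [coeff_deriv_arctanhS, PowerSeries.coeff_one, PowerSeries.coeff_zero_eq_constantCoeff]
  · rw [if_pos h]
    simp only [coeff_deriv_arctanhS, PowerSeries.coeff_one,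
      show (n-2)%2 = n%2 by omega, if_neg (show n ≠ 0 by omega)]
    rcases (by omega : n % 2 = 0 ∨ n % 2 = 1) with he | he <;> simp [he]

lemma coeff_arctanh_pow_eq_zero {n i : ℕ} (h : n < i) :
    PowerSeries.coeff n (arctanhS ^ i) = 0 := by
  have hd : (X : ℚ⟦X⟧) ∣ arctanhS := by
    rw [PowerSeries.X_dvd_iff]
    simp [arctanhS, ← coeff_zero_eq_constantCoeff_apply]
  exact PowerSeries.X_pow_dvd_iff.mp (pow_dvd_pow_of_dvd hd i) n h

lemma pow_deriv (i : ℕ) :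
    ((1 : ℚ⟦X⟧) - X ^ 2) * (PowerSeries.derivative ℚ (arctanhS ^ i))
      = i • arctanhS ^ (i - 1) := by
  rw [Derivation.leibniz_pow, smul_eq_mul, mul_smul_comm, ← mul_assoc,
    mul_comm ((1 : ℚ⟦X⟧) - X ^ 2), mul_assoc, key, mul_one]

lemma coeff_comb (i n : ℕ) (hn : 1 ≤ n) :
    ((n : ℚ) + 1) * PowerSeries.coeff (n + 1) (arctanhS ^ i)
      - ((n : ℚ) - 1) * PowerSeries.coeff (n - 1) (arctanhS ^ i)
      = (i : ℚ) * PowerSeries.coeff n (arctanhS ^ (i - 1)) := by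
  have h := congrArg (PowerSeries.coeff n) (pow_deriv i)
  rw [sub_mul, one_mul, map_sub,
    show (X : ℚ⟦X⟧) ^ 2 * PowerSeries.derivative ℚ (arctanhS ^ i)
      = PowerSeries.derivative ℚ (arctanhS ^ i) * X ^ 2 by ring,
    PowerSeries.coeff_mul_X_pow', PowerSeries.coeff_derivative, map_nsmul] at h
  simp only [nsmul_eq_mul] at h
  rcases Nat.lt_or_ge n 2 with h2 | h2
  · have hn1 : n = 1 := by omega
    subst hn1
    rw [if_neg (by omega)] at h
    push_cast at h ⊢
    linarith [h]
  · rw [if_pos h2, PowerSeries.coeff_derivative] at h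
    have hc3 : (n - 2 : ℕ) + 1 = n - 1 := by omega
    rw [hc3] at h
    push_cast [Nat.cast_sub hn, Nat.cast_sub h2] at h ⊢
    linarith [h]

noncomputable def eN (n N : ℕ) : ℚ :=
  ∑ i ∈ Finset.range N, (2 : ℚ) ^ i / (i.factorial : ℚ) * PowerSeries.coeff n (arctanhS ^ i)

lemma eN_stable (n : ℕ) {N : ℕ} (h : n < N) : eN n N = eN n (n + 1) := by
  unfold eN
  refine (Finset.sum_subset (by intro x hx; simp at hx ⊢; omega) ?_).symm
  intro x hx hx'
  simp only [Finset.mem_range] at hx hx'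
  rw [coeff_arctanh_pow_eq_zero (by omega), mul_zero]

lemma eN_rec (n : ℕ) (hn : 1 ≤ n) :
    ((n : ℚ) + 1) * eN (n + 1) (n + 2) = 2 * eN n (n + 1) + ((n : ℚ) - 1) * eN (n - 1) n := by
  have lhs : ∑ i ∈ Finset.range (n + 3), (2 : ℚ) ^ i / (i.factorial : ℚ) *
      ((i : ℚ) * PowerSeries.coeff n (arctanhS ^ (i - 1)))
      = ((n : ℚ) + 1) * eN (n + 1) (n + 3) - ((n : ℚ) - 1) * eN (n - 1) (n + 3) := by
    rw [eN, eN, Finset.mul_sum, Finset.mul_sum, ← Finset.sum_sub_distrib]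
    refine Finset.sum_congr rfl fun i _ => ?_
    rw [← coeff_comb i n hn]; ring
  have rhs : ∑ i ∈ Finset.range (n + 3), (2 : ℚ) ^ i / (i.factorial : ℚ) *
      ((i : ℚ) * PowerSeries.coeff n (arctanhS ^ (i - 1)))
      = 2 * eN n (n + 2) := by
    rw [Finset.sum_range_succ' _ (n + 2)]
    simp only [Nat.cast_zero, zero_mul, mul_zero, add_zero, Nat.add_sub_cancel]
    rw [eN, Finset.mul_sum]
    refine Finset.sum_congr rfl fun i _ => ?_
    have : (((i + 1).factorial : ℚ)) = ((i : ℚ) + 1) * (i.factorial : ℚ) := by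
      rw [Nat.factorial_succ]; push_cast; ring
    rw [this]
    have h1 : ((i.factorial : ℚ)) ≠ 0 := Nat.cast_ne_zero.mpr i.factorial_ne_zero
    have h2 : ((i : ℚ) + 1) ≠ 0 := by positivity
    field_simp
    push_cast
    ring
  rw [eN_stable (n+1) (by omega), eN_stable (n-1) (by omega : n - 1 < n + 3)] at lhs
  rw [eN_stable n (by omega)] at rhs
  have : n - 1 + 1 = n := by omega
  rw [this] at lhs
  linarith [lhs, rhs]

lemma eN_eq_two (n : ℕ) (hn : 1 ≤ n) : eN n (n + 1) = 2 := by
  induction n using Nat.strong_induction_on with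
  | _ n ih =>
    match n, hn with
    | 1, _ =>
      rw [eN]
      rw [Finset.sum_range_succ, Finset.sum_range_one]
      simp [pow_one, coeff_arctanhS, coeff_arctanh_pow_eq_zero (by omega : 0 < 1)]
    | (m + 2), _ =>
      have hr := eN_rec (m + 1) (by omega)
      have h1 : eN (m + 1) (m + 2) = 2 := ih (m + 1) (by omega) (by omega)
      rcases Nat.eq_zero_or_pos m with hm | hm
      · subst hm
        simp only [h1] at hr
        norm_num at hr ⊢
        linarith [hr]
      · have h0 : eN m (m + 1) = 2 := ih m (by omega) hm
        have : (m + 1 : ℕ) - 1 = m := by omega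
        rw [this, h0, h1] at hr
        push_cast at hr ⊢
        have : ((m : ℚ) + 2) * eN (m + 2) (m + 2 + 1) = ((m : ℚ) + 2) * 2 := by
          linarith [hr]
        exact mul_left_cancel₀ (by positivity) this

/-- ∑_{i=1}^{n} θ(n,i) 2^{i-1} = n! for all n ≥ 1. -/
theorem sum_arctanh_numbers_pow_two (n : ℕ) (hn : 1 ≤ n) :
    ∑ i ∈ Finset.Icc 1 n, thetaA n i * (2 : ℚ) ^ (i - 1) = (n.factorial : ℚ) := by
  have hstep : ∀ i ∈ Finset.Icc 1 n, thetaA n i * (2 : ℚ) ^ (i - 1)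
      = (n.factorial : ℚ) / 2 *
        ((2 : ℚ) ^ i / (i.factorial : ℚ) * PowerSeries.coeff n (arctanhS ^ i)) := by
    intro i hi
    simp only [Finset.mem_Icc] at hi
    obtain ⟨j, rfl⟩ : ∃ j, i = j + 1 := ⟨i - 1, by omega⟩
    rw [thetaA, Nat.add_sub_cancel, pow_succ]
    have h1 : (((j + 1).factorial : ℚ)) ≠ 0 := Nat.cast_ne_zero.mpr (j+1).factorial_ne_zero
    field_simp
    ring
  rw [Finset.sum_congr rfl hstep]
  have hsub : ∑ i ∈ Finset.Icc 1 n, (n.factorial : ℚ) / 2 *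
        ((2 : ℚ) ^ i / (i.factorial : ℚ) * PowerSeries.coeff n (arctanhS ^ i))
      = ∑ i ∈ Finset.range (n + 1), (n.factorial : ℚ) / 2 *
        ((2 : ℚ) ^ i / (i.factorial : ℚ) * PowerSeries.coeff n (arctanhS ^ i)) := by
    refine Finset.sum_subset (by intro x hx; simp at hx ⊢; omega) ?_
    intro x hx hx'
    simp only [Finset.mem_range, Finset.mem_Icc] at hx hx'
    have hx0 : x = 0 := by omega
    subst hx0
    simp [PowerSeries.coeff_one, show n ≠ 0 by omega]
  rw [hsub, ← Finset.mul_sum, ← eN, eN_eq_two n hn]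
  ring
end
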